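/- For the complete homogeneous symmetric polynomials h_i in n variables, D_-(h_i) = -(n + i - 1)·h_{i-1} and D_+(h_i) = (i+1)·h_{i+1} - h_1·h_i, where D_- = -Σ_{k=1}^n ∂_k and D_+ = Σ_{k=1}^n x_k² ∂_k. -/

import Mathlib

open MvPolynomial Finset

/-- `D₋ = -Σ ∂ₖ`. -/
noncomputable def Dminus (n : ℕ) (p : MvPolynomial (Fin n) ℚ) : MvPolynomial (Fin n) ℚ :=
  -∑ k : Fin n, pderiv k p

/-- `D₊ = Σ xₖ² ∂ₖ`. -/
noncomputable def Dplus (n : ℕ) (p : MvPolynomial (Fin n) ℚ) : MvPolynomial (Fin n) ℚ :=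
  ∑ k : Fin n, X k ^ 2 * pderiv k p

/-- The complete homogeneous symmetric polynomial `hᵢ` in `n` variables. -/
noncomputable def hsymm (n i : ℕ) : MvPolynomial (Fin n) ℚ :=
  ∑ s : Sym (Fin n) i, ((s : Multiset (Fin n)).map X).prod

namespace DAux

variable {n : ℕ}

lemma sum_univ_finsupp (d : Fin n →₀ ℕ) : ∑ k, d k = d.sum fun _ e => e :=
  (Finsupp.sum_fintype d (fun _ e => e) fun _ => rfl).symm

lemma sum_univ_add (d e : Fin n →₀ ℕ) :
    Finset.univ.sum ⇑(d + e) = Finset.univ.sum ⇑d + Finset.univ.sum ⇑e := by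
  simp [Finsupp.add_apply, Finset.sum_add_distrib]

lemma sum_univ_single (k : Fin n) :
    Finset.univ.sum ⇑(Finsupp.single k 1 : Fin n →₀ ℕ) = 1 := by
  simp [Finsupp.single_apply]

lemma card_toMultiset' (d : Fin n →₀ ℕ) :
    Multiset.card (Finsupp.toMultiset d) = ∑ k, d k := by
  rw [Finsupp.card_toMultiset, Finsupp.sum_fintype _ _ fun _ => rfl]
  rfl

lemma sum_count (m : Multiset (Fin n)) :
    ∑ k, Multiset.toFinsupp m k = Multiset.card m := by
  have := card_toMultiset' (Multiset.toFinsupp m)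
  rw [Multiset.toFinsupp_toMultiset] at this
  exact this.symm

lemma prod_multiset_X (s : Multiset (Fin n)) :
    ((s.map X).prod : MvPolynomial (Fin n) ℚ) = monomial (Multiset.toFinsupp s) 1 := by
  induction s using Multiset.induction with
  | empty => simp [monomial_zero']
  | cons a s ih =>
    rw [Multiset.map_cons, Multiset.prod_cons, ih, show (a ::ₘ s) = {a} + s from rfl,
      Multiset.toFinsupp_add, Multiset.toFinsupp_singleton,
      show (X a : MvPolynomial (Fin n) ℚ) = monomial (Finsupp.single a 1) 1 from rfl,
      monomial_mul, one_mul]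

lemma hsymm_eq (j : ℕ) :
    hsymm n j = ∑ d ∈ Finset.finsuppAntidiag (Finset.univ : Finset (Fin n)) j,
      monomial d 1 := by
  rw [_root_.hsymm]
  refine Finset.sum_bij' (fun s _ => Multiset.toFinsupp s.1)
    (fun d hd => (⟨Finsupp.toMultiset d, by
      obtain ⟨h1, -⟩ := Finset.mem_finsuppAntidiag.mp hd
      rw [card_toMultiset']; exact h1⟩ : Sym (Fin n) j))
    (fun s _ => ?_) (fun d hd => Finset.mem_univ _) (fun s _ => ?_) (fun d hd => ?_)
    (fun s _ => prod_multiset_X s.1)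
  · rw [Finset.mem_finsuppAntidiag]
    exact ⟨by rw [show Finset.univ.sum ⇑(Multiset.toFinsupp s.1) = ∑ k, Multiset.toFinsupp s.1 k
      from rfl, sum_count, s.2], Finset.subset_univ _⟩
  · exact Subtype.ext (Multiset.toFinsupp_toMultiset s.1)
  · exact Finsupp.toMultiset_toFinsupp d

lemma key (k : Fin n) (m : ℕ) (hm : 1 ≤ m) (φ : (Fin n →₀ ℕ) → (Fin n →₀ ℕ)) :
    ∑ e ∈ Finset.finsuppAntidiag (Finset.univ : Finset (Fin n)) m,
      (monomial (φ e) ((e k : ℚ))) =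
    ∑ d ∈ Finset.finsuppAntidiag (Finset.univ : Finset (Fin n)) (m - 1),
      monomial (φ (d + Finsupp.single k 1)) ((d k : ℚ) + 1) := by
  rw [← Finset.sum_filter_of_ne (p := fun e => e k ≠ 0)
    (fun e _ hne => by
      intro h0
      rw [show ((e k : ℚ)) = 0 by exact_mod_cast h0] at hne
      simp at hne)]
  refine Finset.sum_bij' (fun (e : Fin n →₀ ℕ) _ => e - Finsupp.single k 1)
    (fun (d : Fin n →₀ ℕ) _ => d + Finsupp.single k 1) ?_ ?_ ?_ ?_ ?_
  · intro e he
    rw [Finset.mem_filter, Finset.mem_finsuppAntidiag] at he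
    obtain ⟨⟨hsum, -⟩, hek⟩ := he
    have hle : Finsupp.single k 1 ≤ e :=
      Finsupp.single_le_iff.mpr (Nat.one_le_iff_ne_zero.mpr hek)
    have hrec : e - Finsupp.single k 1 + Finsupp.single k 1 = e := tsub_add_cancel_of_le hle
    rw [Finset.mem_finsuppAntidiag]
    refine ⟨?_, Finset.subset_univ _⟩
    have hsum' : ∑ j, e j = m := hsum
    have h2 : ∑ j, e j = (∑ j, (e - Finsupp.single k 1 : Fin n →₀ ℕ) j)
        + ∑ j, (Finsupp.single k 1 : Fin n →₀ ℕ) j := by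
      rw [← Finset.sum_add_distrib]
      refine Finset.sum_congr rfl fun j _ => ?_
      conv_lhs => rw [← hrec]
      rfl
    have h3 : ∑ j, (Finsupp.single k 1 : Fin n →₀ ℕ) j = 1 := by
      simp [Finsupp.single_apply]
    have goal : ∑ j, (e - Finsupp.single k 1 : Fin n →₀ ℕ) j = m - 1 := by omega
    exact goal
  · intro d hd
    rw [Finset.mem_finsuppAntidiag] at hd
    obtain ⟨hsum, -⟩ := hd
    have hsum' : ∑ j, d j = m - 1 := hsum
    rw [Finset.mem_filter, Finset.mem_finsuppAntidiag]
    refine ⟨⟨?_, Finset.subset_univ _⟩, ?_⟩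
    · have h2 : ∑ j, (d + Finsupp.single k 1 : Fin n →₀ ℕ) j
          = (∑ j, d j) + ∑ j, (Finsupp.single k 1 : Fin n →₀ ℕ) j := by
        rw [← Finset.sum_add_distrib]; rfl
      have h3 : ∑ j, (Finsupp.single k 1 : Fin n →₀ ℕ) j = 1 := by
        simp [Finsupp.single_apply]
      have goal : ∑ j, (d + Finsupp.single k 1 : Fin n →₀ ℕ) j = m := by omega
      exact goal
    · have goal : (d + Finsupp.single k 1 : Fin n →₀ ℕ) k ≠ 0 := by
        simp [Finsupp.add_apply, Finsupp.single_eq_same]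
      exact goal
  · intro e he
    rw [Finset.mem_filter] at he
    have hle : Finsupp.single k 1 ≤ e :=
      Finsupp.single_le_iff.mpr (Nat.one_le_iff_ne_zero.mpr he.2)
    have goal : e - Finsupp.single k 1 + Finsupp.single k 1 = e := tsub_add_cancel_of_le hle
    exact goal
  · intro d _
    have goal : (d + Finsupp.single k 1) - Finsupp.single k 1 = d := by
      ext j; simp [Finsupp.tsub_apply]
    exact goal
  · intro e he
    rw [Finset.mem_filter] at he
    have hle : Finsupp.single k 1 ≤ e :=
      Finsupp.single_le_iff.mpr (Nat.one_le_iff_ne_zero.mpr he.2)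
    have hrec : e - Finsupp.single k 1 + Finsupp.single k 1 = e := tsub_add_cancel_of_le hle
    have hval : (e - Finsupp.single k 1 : Fin n →₀ ℕ) k + 1 = e k := by
      have h1 : 1 ≤ e k := Nat.one_le_iff_ne_zero.mpr he.2
      have h2 : (e - Finsupp.single k 1 : Fin n →₀ ℕ) k = e k - 1 := by
        rw [Finsupp.tsub_apply, Finsupp.single_eq_same]
      omega
    have goal : (monomial (φ e)) ((e k : ℚ)) =
        (monomial (φ (e - Finsupp.single k 1 + Finsupp.single k 1)))
          ((((e - Finsupp.single k 1 : Fin n →₀ ℕ)) k : ℚ) + 1) := by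
      rw [hrec]
      congr 1
      exact_mod_cast hval.symm
    exact goal

lemma smul_hsymm (c : ℚ) (j : ℕ) :
    c • hsymm n j = ∑ d ∈ Finset.finsuppAntidiag (Finset.univ : Finset (Fin n)) j,
      monomial d c := by
  rw [hsymm_eq, Finset.smul_sum]
  refine Finset.sum_congr rfl fun d _ => ?_
  rw [smul_monomial, smul_eq_mul, mul_one]

end DAux

open DAux Finsupp in
/-- `D₋(hᵢ) = -(n+i-1)·h_{i-1}` and `D₊(hᵢ) = (i+1)·h_{i+1} - h₁·hᵢ` for `1 ≤ i ≤ n`. -/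
theorem D_hsymm (n i : ℕ) (h1 : 1 ≤ i) (hn : i ≤ n) :
    Dminus n (hsymm n i) = -(((n + i - 1 : ℕ) : ℚ) • hsymm n (i - 1)) ∧
    Dplus n (hsymm n i) =
      ((i + 1 : ℕ) : ℚ) • hsymm n (i + 1) - hsymm n 1 * hsymm n i := by
  have hsum_single : ∀ k : Fin n, Finset.univ.sum ⇑(Finsupp.single k 1 : Fin n →₀ ℕ) = 1 := by
    intro k; simp [Finsupp.single_apply]
  constructor
  · rw [Dminus, neg_inj, smul_hsymm]
    calc ∑ k : Fin n, pderiv k (hsymm n i)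
        = ∑ k : Fin n, ∑ d ∈ Finset.finsuppAntidiag (Finset.univ : Finset (Fin n)) i,
            monomial (d - Finsupp.single k 1) ((d k : ℚ)) := by
          refine Finset.sum_congr rfl fun k _ => ?_
          rw [hsymm_eq, map_sum]
          refine Finset.sum_congr rfl fun d _ => ?_
          rw [pderiv_monomial, one_mul]
      _ = ∑ k : Fin n, ∑ d ∈ Finset.finsuppAntidiag (Finset.univ : Finset (Fin n)) (i - 1),
            monomial d ((d k : ℚ) + 1) := by
          refine Finset.sum_congr rfl fun k _ => ?_
          have h := key (n := n) k i h1 (fun x => x - Finsupp.single k 1)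
          simp only [add_tsub_cancel_right] at h
          exact h
      _ = ∑ d ∈ Finset.finsuppAntidiag (Finset.univ : Finset (Fin n)) (i - 1),
            monomial d (((n + i - 1 : ℕ) : ℚ)) := by
          rw [Finset.sum_comm]
          refine Finset.sum_congr rfl fun d hd => ?_
          rw [← map_sum]
          congr 1
          obtain ⟨hsum, -⟩ := Finset.mem_finsuppAntidiag.mp hd
          rw [Finset.sum_add_distrib]
          have : ∑ k : Fin n, ((d k : ℚ)) = ((i - 1 : ℕ) : ℚ) := by
            rw [← Nat.cast_sum, hsum]
          rw [this]
          simp only [Finset.sum_const, Finset.card_univ, Fintype.card_fin, nsmul_eq_mul, mul_one]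
          have hcast : (n + i - 1 : ℕ) = (i - 1) + n := by omega
          rw [hcast]
          push_cast
          ring
  · rw [eq_sub_iff_add_eq]
    have hone : hsymm n 1 = ∑ k : Fin n, X k := by
      rw [show hsymm n 1 = MvPolynomial.hsymm (Fin n) ℚ 1 from rfl, MvPolynomial.hsymm_one]
    calc Dplus n (hsymm n i) + hsymm n 1 * hsymm n i
        = ∑ k : Fin n, ∑ d ∈ Finset.finsuppAntidiag (Finset.univ : Finset (Fin n)) i,
            monomial (d + Finsupp.single k 1) ((d k : ℚ) + 1) := by
          rw [Dplus, hone, hsymm_eq i, Finset.sum_mul, ← Finset.sum_add_distrib]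
          refine Finset.sum_congr rfl fun k _ => ?_
          rw [map_sum, Finset.mul_sum, Finset.mul_sum, ← Finset.sum_add_distrib]
          refine Finset.sum_congr rfl fun d _ => ?_
          rw [pderiv_monomial, one_mul]
          by_cases hdk : d k = 0
          · rw [hdk]
            simp only [Nat.cast_zero, map_zero, mul_zero, zero_add, zero_add]
            rw [show (X k : MvPolynomial (Fin n) ℚ) = monomial (Finsupp.single k 1) 1 from rfl,
              monomial_mul, mul_one, add_comm]
          · have hge : 1 ≤ d k := Nat.one_le_iff_ne_zero.mpr hdk
            rw [show ((X k : MvPolynomial (Fin n) ℚ)) ^ 2 = monomial (Finsupp.single k 2) 1 from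
              X_pow_eq_monomial, monomial_mul, one_mul,
              show (X k : MvPolynomial (Fin n) ℚ) = monomial (Finsupp.single k 1) 1 from rfl,
              monomial_mul, one_mul]
            have hexp : Finsupp.single k 2 + (d - Finsupp.single k 1)
                = d + Finsupp.single k 1 := by
              ext j
              by_cases hj : j = k
              · subst hj
                simp only [Finsupp.add_apply, Finsupp.tsub_apply, Finsupp.single_eq_same]
                omega
              · simp [Finsupp.add_apply, Finsupp.tsub_apply,
                  Finsupp.single_eq_of_ne' (fun h => hj h.symm)]
            rw [hexp, show Finsupp.single k 1 + d = d + Finsupp.single k 1 from add_comm _ _,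
              ← map_add]
      _ = ∑ k : Fin n, ∑ e ∈ Finset.finsuppAntidiag (Finset.univ : Finset (Fin n)) (i + 1),
            monomial e ((e k : ℚ)) := by
          refine Finset.sum_congr rfl fun k _ => ?_
          have h := key (n := n) k (i + 1) (Nat.le_add_left 1 i) id
          simp only [id_eq, Nat.add_sub_cancel] at h
          exact h.symm
      _ = ((i + 1 : ℕ) : ℚ) • hsymm n (i + 1) := by
          rw [smul_hsymm, Finset.sum_comm]
          refine Finset.sum_congr rfl fun e he => ?_
          rw [← map_sum]
          congr 1
          obtain ⟨hsum, -⟩ := Finset.mem_finsuppAntidiag.mp he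
          rw [← Nat.cast_sum, hsum]
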